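/- Let $V$ be a finite-dimensional real inner product space, $R \subset V \setminus \{0\}$ a finite set, and $R^+ \subseteq R$ with $R$ the disjoint union of $R^+$ and $-R^+$. Let $\lambda \in V$ satisfy $\langle \beta, \lambda \rangle \geq 0$ for all $\beta \in R^+$, and suppose there is a function $m : R^+ \to \mathbb{N}$ with $m(\alpha) \cdot \langle \alpha, \alpha \rangle = 2 \langle \alpha, \lambda \rangle$ for every $\alpha \in R^+$. Let $w : V \to V$ be a linear isometry with $w(R) = R$ and $w(\lambda) = \lambda$. Then for every map $q$ from $R$ to a commutative monoid $M$, one has $\prod_{\alpha \in R^+} q(w(\alpha))^{m(\alpha)} = \prod_{\alpha \in R^+} q(\alpha)^{m(\alpha)}$. -/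
import Mathlib


open scoped RealInnerProductSpace

/-- Well-definedness of the products `p_k`: the product
`∏_{α ∈ R⁺} q(α)^{m(α)}` is unchanged when the positive roots are replaced by
their images under an isometry `w` stabilizing `R` and the dominant weight `λ`. -/
theorem stmt_1 {V : Type*} [NormedAddCommGroup V] [InnerProductSpace ℝ V]
    [FiniteDimensional ℝ V] {M : Type*} [CommMonoid M]
    (R Rpos : Finset V) (hR0 : ∀ α ∈ R, α ≠ 0)
    (hsub : Rpos ⊆ R)
    (hcover : (R : Set V) = (Rpos : Set V) ∪ (fun β => -β) '' (Rpos : Set V))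
    (hdisj : Disjoint (Rpos : Set V) ((fun β => -β) '' (Rpos : Set V)))
    (lam : V) (hdom : ∀ β ∈ Rpos, 0 ≤ ⟪β, lam⟫)
    (m : V → ℕ) (hm : ∀ α ∈ Rpos, (m α : ℝ) * ⟪α, α⟫ = 2 * ⟪α, lam⟫)
    (w : V →ₗᵢ[ℝ] V) (hwR : ⇑w '' (R : Set V) = (R : Set V)) (hwlam : w lam = lam)
    (q : V → M) :
    ∏ α ∈ Rpos, q (w α) ^ m α = ∏ α ∈ Rpos, q α ^ m α := by
  classical
  have hinner : ∀ a b : V, ⟪w a, w b⟫ = ⟪a, b⟫ := fun a b => w.inner_map_map a b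
  have hwlam' : ∀ a : V, ⟪w a, lam⟫ = ⟪a, lam⟫ := by
    intro a
    calc ⟪w a, lam⟫ = ⟪w a, w lam⟫ := by rw [hwlam]
      _ = ⟪a, lam⟫ := hinner a lam
  set S := Rpos.filter (fun α => m α ≠ 0) with hS
  have hprod : ∀ f : V → M, ∏ α ∈ Rpos, f α ^ m α = ∏ α ∈ S, f α ^ m α := by
    intro f
    refine (Finset.prod_subset (Finset.filter_subset _ _) ?_).symm
    intro x hx hxS
    have hmx : m x = 0 := by
      by_contra h
      exact hxS (Finset.mem_filter.mpr ⟨hx, h⟩)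
    simp [hmx]
  have hpos : ∀ α ∈ Rpos, (0:ℝ) < ⟪α, α⟫ := by
    intro α hα
    rw [real_inner_self_eq_norm_sq]
    have hx : 0 < ‖α‖ := norm_pos_iff.mpr (hR0 α (hsub hα))
    positivity
  have hlam_ne : ∀ α ∈ S, ⟪α, lam⟫ ≠ 0 := by
    intro α hα hz
    obtain ⟨hαR, hmα⟩ := Finset.mem_filter.mp hα
    have h1 := hm α hαR
    rw [hz, mul_zero] at h1
    rcases mul_eq_zero.mp h1 with h2 | h2
    · exact hmα (by exact_mod_cast h2)
    · exact (ne_of_gt (hpos α hαR)) h2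
  have hmaps : ∀ α ∈ S, w α ∈ Rpos := by
    intro α hα
    obtain ⟨hαR, _⟩ := Finset.mem_filter.mp hα
    have hwα : w α ∈ (R : Set V) := by
      rw [← hwR]; exact ⟨α, hsub hαR, rfl⟩
    rw [hcover] at hwα
    rcases hwα with h | ⟨β, hβ, hβe⟩
    · exact h
    · exfalso
      have h1 : ⟪w α, lam⟫ = ⟪α, lam⟫ := hwlam' α
      have h2 : ⟪w α, lam⟫ = -⟪β, lam⟫ := by
        rw [← hβe]; simp [inner_neg_left]
      have h3 : 0 ≤ ⟪α, lam⟫ := hdom α hαR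
      have h4 : 0 ≤ ⟪β, lam⟫ := hdom β hβ
      exact hlam_ne α hα (by linarith)
  have hmw : ∀ α ∈ S, m (w α) = m α := by
    intro α hα
    obtain ⟨hαR, _⟩ := Finset.mem_filter.mp hα
    have h1 := hm (w α) (hmaps α hα)
    rw [hinner, hwlam'] at h1
    have h2 := hm α hαR
    have hne := ne_of_gt (hpos α hαR)
    have h3 : (m (w α) : ℝ) = m α := mul_right_cancel₀ hne (h1.trans h2.symm)
    exact_mod_cast h3
  have hmapsS : ∀ α ∈ S, w α ∈ S := by
    intro α hα
    refine Finset.mem_filter.mpr ⟨hmaps α hα, ?_⟩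
    rw [hmw α hα]
    exact (Finset.mem_filter.mp hα).2
  have hinj : Function.Injective (⇑w) := w.injective
  have himg : S.image (⇑w) = S := by
    apply Finset.eq_of_subset_of_card_le
    · intro x hx
      obtain ⟨α, hα, rfl⟩ := Finset.mem_image.mp hx
      exact hmapsS α hα
    · rw [Finset.card_image_of_injective _ hinj]
  rw [hprod (fun α => q (w α)), hprod q]
  conv_rhs => rw [← himg]
  rw [Finset.prod_image (fun a _ b _ h => hinj h)]
  exact Finset.prod_congr rfl (fun α hα => by rw [hmw α hα])
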